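/- If x_R is an optimizer of the continuous relaxation min{ f(x) : A x = b, E x ≤ f₀, x ∈ ℝⁿ } with optimal value z_R and Lagrange multipliers λ_A (for A x = b) and λ_E ≥ 0 (for E x ≤ f₀) satisfying the KKT conditions, and if ρ > ‖λ_A‖, then every x with E x ≤ f₀ and f(x) + ρ‖A x − b‖ ≤ z_IP satisfies ‖A x − b‖ ≤ (z_IP − z_R)/(ρ − ‖λ_A‖). -/

import Mathlib

open scoped RealInnerProductSpace Matrix

/-- Reinterpret a plain vector as an element of Euclidean space. -/
def toEuc {m : ℕ} (v : Fin m → ℝ) : EuclideanSpace ℝ (Fin m) := WithLp.toLp 2 v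

lemma inner_toEuc {m : ℕ} (u v : Fin m → ℝ) :
    ⟪toEuc u, toEuc v⟫ = u ⬝ᵥ v := by
  simp [toEuc, PiLp.inner_apply, dotProduct, mul_comm]

lemma toEuc_sub {m : ℕ} (u v : Fin m → ℝ) : toEuc u - toEuc v = toEuc (u - v) := (WithLp.toLp_sub 2 u v).symm

/-- Proposition 2 of the paper, first part.
If `x_R` optimizes the continuous relaxation `min{f(x) : A x = b, E x ≤ f₀}` with value
`z_R` and KKT multipliers `λ_A`, `λ_E ≥ 0`, and `ρ > ‖λ_A‖`, then every `x` with
`E x ≤ f₀` and `f(x) + ρ‖A x − b‖ ≤ z_IP` satisfies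
`‖A x − b‖ ≤ (z_IP − z_R)/(ρ − ‖λ_A‖)`. -/
theorem constraint_violation_bound
    {n m p : ℕ}
    (f : EuclideanSpace ℝ (Fin n) → ℝ) (g : EuclideanSpace ℝ (Fin n) → EuclideanSpace ℝ (Fin n))
    -- convexity and differentiability of `f`, with gradient `g` (first-order condition)
    (hconv : ∀ x y : EuclideanSpace ℝ (Fin n), f x + ⟪g x, y - x⟫ ≤ f y)
    (A : Matrix (Fin m) (Fin n) ℝ) (E : Matrix (Fin p) (Fin n) ℝ)
    (b : EuclideanSpace ℝ (Fin m)) (f₀ : Fin p → ℝ)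
    (xR : EuclideanSpace ℝ (Fin n)) (zR zIP : ℝ)
    (lamA : EuclideanSpace ℝ (Fin m)) (lamE : Fin p → ℝ)
    -- feasibility of `x_R` and its optimal value
    (hfeasA : toEuc (A.mulVec xR) = b)
    (hfeasE : ∀ i, E.mulVec xR i ≤ f₀ i)
    (hval : f xR = zR)
    -- KKT conditions at `x_R`
    (hstat : g xR = toEuc (A.transpose.mulVec lamA) - toEuc (E.transpose.mulVec lamE))
    (hcompE : lamE ⬝ᵥ (f₀ - E.mulVec xR) = 0)
    (hcompA : lamA ⬝ᵥ (toEuc (A.mulVec xR) - b) = 0)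
    (hlamE : ∀ i, 0 ≤ lamE i)
    (hzIP : zR ≤ zIP)
    (ρ : ℝ) (hρ : ‖lamA‖ < ρ) :
    ∀ x : EuclideanSpace ℝ (Fin n), (∀ i, E.mulVec x i ≤ f₀ i) →
      f x + ρ * ‖toEuc (A.mulVec x) - b‖ ≤ zIP →
      ‖toEuc (A.mulVec x) - b‖ ≤ (zIP - zR) / (ρ - ‖lamA‖) := by
  obtain ⟨b', rfl⟩ : ∃ b' : Fin m → ℝ, toEuc b' = b := ⟨b.ofLp, WithLp.toLp_ofLp (x := b)⟩
  obtain ⟨lamA', rfl⟩ : ∃ l : Fin m → ℝ, toEuc l = lamA := ⟨lamA.ofLp, WithLp.toLp_ofLp (x := lamA)⟩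
  obtain ⟨xR', rfl⟩ : ∃ v : Fin n → ℝ, toEuc v = xR := ⟨xR.ofLp, WithLp.toLp_ofLp (x := xR)⟩
  intro x hxE hxf
  obtain ⟨x', rfl⟩ : ∃ v : Fin n → ℝ, toEuc v = x := ⟨x.ofLp, WithLp.toLp_ofLp (x := x)⟩
  -- plain-function facts
  have hbR : A.mulVec xR' = b' := congrArg (fun (v : EuclideanSpace ℝ (Fin m)) => (v : Fin m → ℝ)) hfeasA
  have hmul : ∀ (v w : Fin n → ℝ), A.mulVec (toEuc v) = A.mulVec v := fun _ _ => rfl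
  have hpos : 0 < ρ - ‖toEuc lamA'‖ := by linarith
  set dv : Fin m → ℝ := A.mulVec x' - b' with hdv
  have hdE : toEuc (A.mulVec (toEuc x')) - toEuc b' = toEuc dv := toEuc_sub _ _
  rw [hdE] at hxf ⊢
  -- first-order convexity bound
  have hxsub : toEuc x' - toEuc xR' = toEuc (x' - xR') := toEuc_sub _ _
  have hA : ⟪toEuc (A.transpose.mulVec (toEuc lamA')), toEuc (x' - xR')⟫
      = toEuc lamA' ⬝ᵥ dv := by
    rw [inner_toEuc, Matrix.mulVec_transpose, ← Matrix.dotProduct_mulVec,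
      Matrix.mulVec_sub, hbR]
  have hE : ⟪toEuc (E.transpose.mulVec lamE), toEuc (x' - xR')⟫ ≤ 0 := by
    rw [inner_toEuc, Matrix.mulVec_transpose, ← Matrix.dotProduct_mulVec, Matrix.mulVec_sub]
    have h2 : lamE ⬝ᵥ (E.mulVec x' - E.mulVec xR')
        = lamE ⬝ᵥ (E.mulVec x' - f₀) + lamE ⬝ᵥ (f₀ - E.mulVec xR') := by
      rw [← dotProduct_add]; congr 1; ext i; simp
    have hcompE' : lamE ⬝ᵥ (f₀ - E.mulVec xR') = 0 := hcompE
    rw [h2, hcompE', add_zero]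
    apply Finset.sum_nonpos
    intro i _
    exact mul_nonpos_of_nonneg_of_nonpos (hlamE i) (by simpa [toEuc] using sub_nonpos.mpr (hxE i))
  have hdinner : ⟪toEuc lamA', toEuc dv⟫ = toEuc lamA' ⬝ᵥ dv := inner_toEuc _ _
  have hinner : -(‖toEuc lamA'‖ * ‖toEuc dv‖) ≤ ⟪toEuc lamA', toEuc dv⟫ := by
    have h := abs_real_inner_le_norm (toEuc lamA') (toEuc dv)
    rcases abs_le.mp h with ⟨h1, h2⟩
    linarith
  have hlow : zR - ‖toEuc lamA'‖ * ‖toEuc dv‖ ≤ f (toEuc x') := by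
    have h1 := hconv (toEuc xR') (toEuc x')
    rw [hval, hstat, hxsub, inner_sub_left, hA, ← hdinner] at h1
    linarith
  have hnorm : 0 ≤ ‖toEuc dv‖ := norm_nonneg _
  rw [le_div_iff₀ hpos]
  nlinarith [hxf, hlow]
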